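/- Fix a > 0 and c ∈ [−1, 1]. Define g(t) = log(α(t) − β(t)·c) − log D(t), where α(t) = 1 + sinh(at)/a, β(t) = (cosh(at) − 1)/a, D(t) = 1 + (2/a)·sinh(at) + (2/a²)·(cosh(at) − 1), and E(t) = cosh(at) − sinh(at)·c. Then as t → 0 one has g(t) = −(3/2)·t + (1/2)·t² + (1/2)·t·E(t) + O(t³); that is, the function t ↦ g(t) + (3/2)·t − (1/2)·t² − (1/2)·t·E(t) is O(t³) as t → 0. -/

import Mathlib

noncomputable section

open Real Asymptotics Filter

private lemma powO' {m n : ℕ} (h : m ≤ n) :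
    (fun t : ℝ => t ^ n) =O[nhds 0] fun t => t ^ m := by
  rw [Asymptotics.isBigO_iff]
  refine ⟨1, ?_⟩
  filter_upwards [Metric.ball_mem_nhds (0:ℝ) one_pos] with t ht
  simp only [Metric.mem_ball, dist_zero_right, Real.norm_eq_abs] at ht
  rw [Real.norm_eq_abs, Real.norm_eq_abs, abs_pow, abs_pow, one_mul]
  exact pow_le_pow_of_le_one (abs_nonneg t) ht.le h

private lemma pow1O {n : ℕ} (h : 1 ≤ n) :
    (fun t : ℝ => t ^ n) =O[nhds 0] fun t => t := by
  simpa using powO' (m := 1) h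

private lemma expO : (fun x : ℝ => Real.exp x - (1 + x + x ^ 2 / 2)) =O[nhds 0] fun x => x ^ 3 := by
  rw [Asymptotics.isBigO_iff]
  refine ⟨1, ?_⟩
  filter_upwards [Metric.ball_mem_nhds (0:ℝ) one_pos] with x hx
  simp only [Metric.mem_ball, dist_zero_right, Real.norm_eq_abs] at hx
  have h := Real.exp_bound hx.le (n := 3) (by norm_num)
  have hsum : (∑ i ∈ Finset.range 3, x ^ i / i.factorial) = 1 + x + x ^ 2 / 2 := by
    simp [Finset.sum_range_succ, Nat.factorial]
  rw [hsum] at h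
  norm_num [Nat.factorial] at h
  rw [Real.norm_eq_abs, Real.norm_eq_abs, abs_pow]
  nlinarith [abs_nonneg x, pow_nonneg (abs_nonneg x) 3]

private lemma negO :
    (fun x : ℝ => Real.exp (-x) - (1 - x + x ^ 2 / 2)) =O[nhds 0] fun x => x ^ 3 := by
  have hn : Filter.Tendsto (fun x : ℝ => -x) (nhds 0) (nhds 0) := by
    have h0 : Filter.Tendsto (id : ℝ → ℝ) (nhds 0) (nhds 0) := Filter.tendsto_id
    simpa using h0.neg
  have h1 : (fun x : ℝ => Real.exp (-x) - (1 - x + x ^ 2 / 2)) =O[nhds 0]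
      fun x : ℝ => -(x ^ 3) :=
    (expO.comp_tendsto hn).congr (fun x => by simp [Function.comp]; ring)
      (fun x => by simp [Function.comp]; ring)
  exact h1.trans (isBigO_refl (fun x : ℝ => x ^ 3) _).neg_left

private lemma sinhO : (fun x : ℝ => Real.sinh x - x) =O[nhds 0] fun x => x ^ 3 := by
  refine ((expO.sub negO).const_mul_left (1/2)).congr_left fun x => ?_
  rw [Real.sinh_eq]
  ring

private lemma coshO : (fun x : ℝ => Real.cosh x - (1 + x ^ 2 / 2)) =O[nhds 0] fun x => x ^ 3 := by
  refine ((expO.add negO).const_mul_left (1/2)).congr_left fun x => ?_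
  rw [Real.cosh_eq]
  ring

private lemma logO : (fun x : ℝ => Real.log (1 + x) - (x - x ^ 2 / 2)) =O[nhds 0] fun x => x ^ 3 := by
  rw [Asymptotics.isBigO_iff]
  refine ⟨2, ?_⟩
  have hmem : Metric.ball (0:ℝ) (1/2) ∈ nhds (0:ℝ) := Metric.ball_mem_nhds _ (by norm_num)
  filter_upwards [hmem] with x hx
  simp only [Metric.mem_ball, dist_zero_right, Real.norm_eq_abs] at hx
  have h := Real.abs_log_sub_add_sum_range_le (x := -x) (by rw [abs_neg]; linarith) 2
  have hsum : (∑ i ∈ Finset.range 2, (-x) ^ (i + 1) / ((i:ℝ) + 1)) = -x + x ^ 2 / 2 := by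
    simp [Finset.sum_range_succ]
    ring
  rw [hsum, sub_neg_eq_add] at h
  rw [Real.norm_eq_abs, Real.norm_eq_abs, abs_pow]
  have h1 : |(-x)| ^ (2+1) / (1 - |(-x)|) ≤ 2 * |x| ^ 3 := by
    rw [abs_neg]
    rw [div_le_iff₀ (by linarith)]
    norm_num
    nlinarith [pow_nonneg (abs_nonneg x) 3, abs_nonneg x,
      mul_nonneg (pow_nonneg (abs_nonneg x) 3) (by linarith : (0:ℝ) ≤ 1 - 2 * |x|)]
  have h2 : Real.log (1 + x) - (x - x ^ 2 / 2) = (-x + x ^ 2 / 2) + Real.log (1 + x) := by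
    ring
  rw [h2]
  linarith

private lemma compO {u : ℝ → ℝ} (hu0 : Filter.Tendsto u (nhds 0) (nhds 0))
    (hu : u =O[nhds 0] fun t : ℝ => t) :
    (fun t => Real.log (1 + u t) - (u t - (u t) ^ 2 / 2)) =O[nhds 0] fun t : ℝ => t ^ 3 :=
  (logO.comp_tendsto hu0).trans (by simpa [Function.comp_def] using hu.pow 3)

private def uNf (a c : ℝ) : ℝ → ℝ :=
  fun t => Real.sinh (a * t) / a - (Real.cosh (a * t) - 1) / a * c

private def uDf (a : ℝ) : ℝ → ℝ :=
  fun t => (2 / a) * Real.sinh (a * t) + (2 / a ^ 2) * (Real.cosh (a * t) - 1)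

theorem stmt_7 (a c : ℝ) (ha : 0 < a) (hc : c ∈ Set.Icc (-1 : ℝ) 1)
    (E g : ℝ → ℝ)
    (hE : ∀ t : ℝ, E t = Real.cosh (a * t) - Real.sinh (a * t) * c)
    (hg : ∀ t : ℝ, g t =
      Real.log ((1 + Real.sinh (a * t) / a) - ((Real.cosh (a * t) - 1) / a) * c) -
      Real.log (1 + (2 / a) * Real.sinh (a * t) + (2 / a ^ 2) * (Real.cosh (a * t) - 1))) :
    (fun t : ℝ => g t + (3 / 2) * t - (1 / 2) * t ^ 2 - (1 / 2) * t * E t)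
      =O[nhds 0] fun t : ℝ => t ^ 3 := by
  have ha0 : a ≠ 0 := ne_of_gt ha
  have haT : Filter.Tendsto (fun t : ℝ => a * t) (nhds 0) (nhds 0) := by
    have h0 : Filter.Tendsto (id : ℝ → ℝ) (nhds 0) (nhds 0) := Filter.tendsto_id
    simpa using h0.const_mul a
  have cube : (fun t : ℝ => (a * t) ^ 3) =O[nhds 0] fun t => t ^ 3 := by
    refine ((isBigO_refl (fun t : ℝ => t ^ 3) (nhds 0)).const_mul_left (a ^ 3)).congr_left
      fun t => by ring
  have hS3 : (fun t : ℝ => Real.sinh (a * t) - a * t) =O[nhds 0] fun t => t ^ 3 :=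
    ((sinhO.comp_tendsto haT).congr (fun t => rfl) (fun t => rfl)).trans cube
  have hC3 : (fun t : ℝ => Real.cosh (a * t) - (1 + a ^ 2 * t ^ 2 / 2)) =O[nhds 0]
      fun t => t ^ 3 :=
    ((coshO.comp_tendsto haT).congr (fun t => by simp [Function.comp]; ring)
      (fun t => rfl)).trans cube
  have hp32 : (fun t : ℝ => t ^ 3) =O[nhds 0] fun t => t ^ 2 := powO' (by norm_num)
  have hp31 : (fun t : ℝ => t ^ 3) =O[nhds 0] fun t => t := pow1O (by norm_num)
  have hp21 : (fun t : ℝ => t ^ 2) =O[nhds 0] fun t => t := pow1O (by norm_num)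
  have hid : (fun t : ℝ => t) =O[nhds 0] fun t : ℝ => t := isBigO_refl _ _
  have hmulp : (fun t : ℝ => t ^ 2 * t) =O[nhds 0] fun t => t ^ 3 :=
    (isBigO_refl (fun t : ℝ => t ^ 3) _).congr_left fun t => by ring
  have hmulp2 : (fun t : ℝ => t * t ^ 2) =O[nhds 0] fun t => t ^ 3 :=
    (isBigO_refl (fun t : ℝ => t ^ 3) _).congr_left fun t => by ring
  have hS1 : (fun t : ℝ => Real.sinh (a * t)) =O[nhds 0] fun t => t := by
    refine ((hS3.trans hp31).add (hid.const_mul_left a)).congr_left fun t => by ring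
  have hC2 : (fun t : ℝ => Real.cosh (a * t) - 1) =O[nhds 0] fun t => t ^ 2 := by
    refine ((hC3.trans hp32).add
      ((isBigO_refl (fun t : ℝ => t ^ 2) _).const_mul_left (a ^ 2 / 2))).congr_left
      fun t => by ring
  -- uN facts
  have huN1 : uNf a c =O[nhds 0] fun t => t := by
    refine ((hS1.const_mul_left (1/a)).sub
      ((hC2.trans hp21).const_mul_left (c/a))).congr_left fun t => ?_
    simp only [uNf]
    field_simp
  have huNt : Filter.Tendsto (uNf a c) (nhds 0) (nhds 0) := by
    have hcont : Continuous (uNf a c) := by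
      unfold uNf
      fun_prop
    have := hcont.tendsto 0
    simpa [uNf] using this
  have huN2 : (fun t => uNf a c t - t) =O[nhds 0] fun t : ℝ => t ^ 2 := by
    refine (((hS3.trans hp32).const_mul_left (1/a)).sub
      (hC2.const_mul_left (c/a))).congr_left fun t => ?_
    simp only [uNf]
    field_simp
    ring
  have huN3 : (fun t => uNf a c t - t + (a * c / 2) * t ^ 2) =O[nhds 0] fun t : ℝ => t ^ 3 := by
    refine ((hS3.const_mul_left (1/a)).sub (hC3.const_mul_left (c/a))).congr_left fun t => ?_
    simp only [uNf]
    field_simp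
    ring
  have huN4 : (fun t => (uNf a c t - t) * (uNf a c t + t)) =O[nhds 0] fun t : ℝ => t ^ 3 :=
    (huN2.mul (huN1.add hid)).trans hmulp
  -- uD facts
  have huD1 : uDf a =O[nhds 0] fun t => t := by
    refine ((hS1.const_mul_left (2/a)).add
      ((hC2.trans hp21).const_mul_left (2/a^2))).congr_left fun t => ?_
    simp only [uDf]
  have huDt : Filter.Tendsto (uDf a) (nhds 0) (nhds 0) := by
    have hcont : Continuous (uDf a) := by
      unfold uDf
      fun_prop
    have := hcont.tendsto 0
    simpa [uDf] using this
  have huD2 : (fun t => uDf a t - 2 * t) =O[nhds 0] fun t : ℝ => t ^ 2 := by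
    refine (((hS3.trans hp32).const_mul_left (2/a)).add
      (hC2.const_mul_left (2/a^2))).congr_left fun t => ?_
    simp only [uDf]
    field_simp
    ring
  have huD3 : (fun t => uDf a t - 2 * t - t ^ 2) =O[nhds 0] fun t : ℝ => t ^ 3 := by
    refine ((hS3.const_mul_left (2/a)).add (hC3.const_mul_left (2/a^2))).congr_left fun t => ?_
    simp only [uDf]
    field_simp
    ring
  have huD4 : (fun t => (uDf a t - 2 * t) * (uDf a t + 2 * t)) =O[nhds 0] fun t : ℝ => t ^ 3 :=
    (huD2.mul (huD1.add (hid.const_mul_left 2))).trans hmulp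
  have h7 : (fun t : ℝ => t * (Real.cosh (a * t) - 1)) =O[nhds 0] fun t => t ^ 3 :=
    (hid.mul hC2).trans hmulp2
  have h8 : (fun t : ℝ => t * (Real.sinh (a * t) - a * t)) =O[nhds 0] fun t => t ^ 3 :=
    (hid.mul (hS3.trans hp32)).trans hmulp2
  have hlogN := compO huNt huN1
  have hlogD := compO huDt huD1
  have big := ((((((hlogN.sub hlogD).add huN3).sub (huN4.const_mul_left (1/2))).sub
    huD3).add (huD4.const_mul_left (1/2))).sub (h7.const_mul_left (1/2))).add
    (h8.const_mul_left (c/2))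
  refine big.congr_left fun t => ?_
  rw [hg t, hE t,
    show (1 + Real.sinh (a * t) / a) - ((Real.cosh (a * t) - 1) / a) * c = 1 + uNf a c t from by
      simp only [uNf]; ring,
    show 1 + (2 / a) * Real.sinh (a * t) + (2 / a ^ 2) * (Real.cosh (a * t) - 1) = 1 + uDf a t
      from by simp only [uDf]; ring]
  simp only [uNf, uDf]
  ring
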